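/- There exist absolute constants (for instance any p ≥ 2 and π·√p ≤ N suffice) such that for positive integers N and p satisfying p ≥ 2 and π√p ≤ N, ∑_{l=−N}^{N−1} (2·cos(lπ/(2N)))^{4p} · exp(π²·p·l²/(16·N²)) ≤ 4·N·C(4p, 2p). -/

import Mathlib

open scoped Real
open Finset MeasureTheory

lemma sixteen_pow_le (n : ℕ) (hn : 1 ≤ n) :
    16 ^ n ≤ 4 * n * (Nat.centralBinom n) ^ 2 := by
  induction n with
  | zero => omega
  | succ m ih =>
    rcases Nat.lt_or_ge m 1 with h | hm
    · interval_cases m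
      simp [Nat.centralBinom]
    · have IH := ih hm
      have key := Nat.succ_mul_centralBinom_succ m
      have h2 : 16 ^ (m+1) * (m+1) ≤ (4 * (m+1) * Nat.centralBinom (m+1) ^ 2) * (m+1) := by
        have e : (4 * (m+1) * Nat.centralBinom (m+1) ^ 2) * (m+1)
            = 4 * ((m+1) * Nat.centralBinom (m+1)) ^ 2 := by ring
        rw [e, key]
        have e2 : 4 * (2 * (2*m+1) * Nat.centralBinom m) ^ 2
            = 16 * (2*m+1)^2 * Nat.centralBinom m ^ 2 := by ring
        rw [e2]
        calc 16 ^ (m+1) * (m+1) = 16 * (m+1) * 16 ^ m := by ring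
        _ ≤ 16 * (m+1) * (4 * m * Nat.centralBinom m ^ 2) := Nat.mul_le_mul_left _ IH
        _ ≤ 16 * (2*m+1)^2 * Nat.centralBinom m ^ 2 := by nlinarith
      exact Nat.le_of_mul_le_mul_right h2 (Nat.succ_pos m)

lemma two_pow_le_binom (p : ℕ) (hp : 1 ≤ p) :
    (2:ℝ) ^ (4*p) ≤ 2 * Real.sqrt (2*p) * (Nat.choose (4*p) (2*p)) := by
  have hC : Nat.choose (4*p) (2*p) = Nat.centralBinom (2*p) := by
    rw [Nat.centralBinom]; congr 1; ring
  have h := sixteen_pow_le (2*p) (by omega)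
  rw [← hC] at h
  have h' : (16:ℝ) ^ (2*p) ≤ 4 * (2*(p:ℝ)) * ((Nat.choose (4*p) (2*p)):ℝ)^2 := by
    exact_mod_cast h
  have e1 : (2:ℝ)^(4*p) = Real.sqrt ((16:ℝ)^(2*p)) := by
    rw [show ((16:ℝ)^(2*p)) = ((2:ℝ)^(4*p))^2 by rw [← pow_mul, show (16:ℝ) = 2^4 by norm_num, ← pow_mul]; ring_nf,
      Real.sqrt_sq (by positivity)]
  have e2 : 2 * Real.sqrt (2*(p:ℝ)) * ((Nat.choose (4*p) (2*p)):ℝ)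
      = Real.sqrt (4 * (2*(p:ℝ)) * ((Nat.choose (4*p) (2*p)):ℝ)^2) := by
    rw [show (4 * (2*(p:ℝ)) * ((Nat.choose (4*p) (2*p)):ℝ)^2)
        = (2 * Real.sqrt (2*(p:ℝ)) * ((Nat.choose (4*p) (2*p)):ℝ))^2 by
      rw [mul_pow, mul_pow, Real.sq_sqrt (by positivity)]; ring,
      Real.sqrt_sq (by positivity)]
  rw [e1, e2]
  exact Real.sqrt_le_sqrt h'


lemma cos_le_exp_neg {x : ℝ} (hx : |x| ≤ π/2) :
    Real.cos x ≤ Real.exp (-(7/20) * x^2) := by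
  wlog hx0 : 0 ≤ x generalizing x
  · have := this (x := -x) (by rwa [abs_neg]) (by linarith [le_of_not_ge hx0])
    simpa using this
  rw [abs_of_nonneg hx0] at hx
  rcases eq_or_lt_of_le hx0 with h0 | h0
  · simp [← h0]
  -- x > 0
  have hpi : π < 3.15 := Real.pi_lt_d2
  have hx1 : x/2 ≤ 1 := by nlinarith
  set t := x/2 with ht
  have hsin := Real.sin_gt_sub_cube (by positivity : (0:ℝ) < t)
  have hcos : Real.cos x = 1 - 2 * Real.sin t ^ 2 := by
    have h2t : x = 2 * t := by rw [ht]; ring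
    rw [h2t, Real.cos_two_mul]
    have := Real.sin_sq_add_cos_sq t
    nlinarith
  have htb : t ≤ 0.7875 := by rw [ht]; nlinarith
  have hcube : t^3 ≤ t := by nlinarith [mul_nonneg (mul_nonneg h0.le (sub_nonneg.2 hx1)) (show (0:ℝ) ≤ 1 + t by positivity)]
  have hlow : 0 ≤ t - t^3/4 := by nlinarith
  have hu : t^2 ≤ 0.62015625 := by nlinarith
  have hg : 0 ≤ 0.6 - t^2 + (t^2)^2/8 := by
    nlinarith [mul_nonneg (sub_nonneg.2 hu) (show (0:ℝ) ≤ 7.38 - t^2 by nlinarith)]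
  have hsq : (7/20) * x^2 ≤ 2 * Real.sin t ^ 2 := by
    have h1 : (t - t^3/4)^2 ≤ Real.sin t ^ 2 := by nlinarith
    have h2 : (7/20) * x^2 = (7/5) * t^2 := by rw [ht]; ring
    have h3 : (7/5) * t^2 ≤ 2 * (t - t^3/4)^2 := by nlinarith [mul_nonneg (sq_nonneg t) hg]
    rw [h2]
    linarith
  calc Real.cos x = 1 - 2 * Real.sin t ^ 2 := hcos
    _ ≤ Real.exp (-(2 * Real.sin t ^ 2)) := by
        have := Real.add_one_le_exp (-(2 * Real.sin t ^ 2))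
        linarith
    _ ≤ Real.exp (-(7/20) * x^2) := by
        apply Real.exp_le_exp.mpr; linarith


lemma gauss_sum_le (N : ℕ) (hN : 1 ≤ N) {c : ℝ} (hc : 0 < c) :
    ∑ l ∈ Finset.Icc (-(N : ℤ)) ((N : ℤ) - 1), Real.exp (-c * (l : ℝ)^2)
      ≤ 1 + Real.sqrt (π / c) := by
  set G : ℕ → ℝ := fun k => Real.exp (-c * (k : ℝ)^2) with hG
  set T : ℝ := ∑ k ∈ Finset.range N, G (k+1) with hT
  have hreindex : ∑ l ∈ Finset.Icc (-(N : ℤ)) ((N : ℤ) - 1), Real.exp (-c * (l : ℝ)^2)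
      = ∑ j ∈ Finset.range (2*N), Real.exp (-c * ((j:ℝ) - N)^2) := by
    apply Finset.sum_nbij' (fun l : ℤ => (l + (N:ℤ)).toNat) (fun j : ℕ => (j : ℤ) - (N:ℤ))
    · intro a ha
      simp only [Finset.mem_Icc] at ha
      simp only [Finset.mem_range]
      omega
    · intro a ha
      simp only [Finset.mem_range] at ha
      simp only [Finset.mem_Icc]
      omega
    · intro a ha
      simp only [Finset.mem_Icc] at ha
      omega
    · intro a ha
      simp only [Finset.mem_range] at ha
      omega
    · intro a ha
      simp only [Finset.mem_Icc] at ha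
      congr 1
      have : ((a + N).toNat : ℤ) = a + N := by omega
      have : (((a + N).toNat : ℕ) : ℝ) = (a : ℝ) + N := by exact_mod_cast this
      rw [this]; ring
  rw [hreindex]
  have hsplit : ∑ j ∈ Finset.range (2*N), Real.exp (-c * ((j:ℝ) - N)^2)
      = (∑ j ∈ Finset.Ico 0 N, Real.exp (-c * ((j:ℝ) - N)^2))
        + ∑ j ∈ Finset.Ico N (2*N), Real.exp (-c * ((j:ℝ) - N)^2) := by
    rw [Finset.sum_Ico_consecutive _ (Nat.zero_le N) (by omega), Finset.range_eq_Ico]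
  have hA : ∑ j ∈ Finset.Ico 0 N, Real.exp (-c * ((j:ℝ) - N)^2) = T := by
    rw [← Finset.range_eq_Ico]
    have e1 : ∀ j ∈ Finset.range N, Real.exp (-c * ((j:ℝ) - N)^2) = G (N - 1 - j + 1) := by
      intro j hj
      simp only [Finset.mem_range] at hj
      have : (N - 1 - j + 1 : ℕ) = N - j := by omega
      rw [this, hG]
      congr 1
      have hjN : j ≤ N := by omega
      rw [Nat.cast_sub hjN]
      ring
    rw [Finset.sum_congr rfl e1, hT]
    exact Finset.sum_range_reflect (fun k => G (k+1)) N
  have hB : ∑ j ∈ Finset.Ico N (2*N), Real.exp (-c * ((j:ℝ) - N)^2) ≤ 1 + T := by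
    rw [Finset.sum_Ico_eq_sum_range]
    have e2 : ∀ j ∈ Finset.range (2*N - N), Real.exp (-c * (((N + j : ℕ):ℝ) - N)^2) = G j := by
      intro j hj
      rw [hG]
      congr 1
      push_cast
      ring_nf
    rw [Finset.sum_congr rfl e2]
    have h2N : 2*N - N = N := by omega
    rw [h2N]
    have hN' : N = (N - 1) + 1 := by omega
    rw [hN', Finset.sum_range_succ']
    have h0 : Real.exp (-c * ((0:ℕ):ℝ)^2) = 1 := by norm_num
    have hsub : ∑ i ∈ Finset.range (N-1), G (i+1) ≤ T := by
      rw [hT]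
      apply Finset.sum_le_sum_of_subset_of_nonneg (Finset.range_subset_range.2 (by omega))
      intro i _ _
      simp only [hG]
      positivity
    simp only [hG] at hsub ⊢
    rw [h0]
    linarith
  -- T ≤ sqrt(π/c)/2
  have hTle : T ≤ Real.sqrt (π / c) / 2 := by
    have hanti : AntitoneOn (fun x : ℝ => Real.exp (-c * x^2)) (Set.Icc (0:ℝ) (0 + N)) := by
      intro a ha b hb hab
      simp only
      apply Real.exp_le_exp.2
      have ha0 : 0 ≤ a := ha.1
      have : a^2 ≤ b^2 := by nlinarith
      nlinarith
    have hint := hanti.sum_le_integral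
    simp only [zero_add] at hint
    have hintle : ∫ x in (0:ℝ)..(N:ℝ), Real.exp (-c * x^2) ≤ Real.sqrt (π / c) / 2 := by
      rw [intervalIntegral.integral_of_le (by positivity : (0:ℝ) ≤ (N:ℝ))]
      rw [← integral_gaussian_Ioi c]
      apply setIntegral_mono_set
      · exact (integrable_exp_neg_mul_sq hc).integrableOn
      · filter_upwards with x using by positivity
      · filter_upwards with x using fun hx => hx.1
    calc T = ∑ i ∈ Finset.range N, (fun x : ℝ => Real.exp (-c * x^2)) ((i : ℕ) + 1 : ℕ) := by
          apply Finset.sum_congr rfl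
          intro i _
          simp [hG]
      _ ≤ ∫ x in (0:ℝ)..(N:ℝ), Real.exp (-c * x^2) := hint
      _ ≤ Real.sqrt (π / c) / 2 := hintle
  rw [hsplit, hA]
  linarith

theorem subgaussian_mgf_sum_bound
    (N p : ℕ) (hp : 2 ≤ p) (hpN : π * Real.sqrt p ≤ N) :
    ∑ l ∈ Finset.Icc (-(N : ℤ)) ((N : ℤ) - 1),
        (2 * Real.cos ((l : ℝ) * π / (2 * N))) ^ (4 * p) *
          Real.exp (π ^ 2 * p * (l : ℝ) ^ 2 / (16 * (N : ℝ) ^ 2))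
      ≤ 4 * N * (Nat.choose (4 * p) (2 * p)) := by
  have hpi : (3.141592:ℝ) < π := Real.pi_gt_d6
  have hp1 : (1:ℝ) ≤ p := by exact_mod_cast le_trans one_le_two hp
  have hsp1 : (1:ℝ) ≤ Real.sqrt p := by
    rw [show (1:ℝ) = Real.sqrt 1 by simp]
    exact Real.sqrt_le_sqrt hp1
  have hNR : (3:ℝ) ≤ N := by nlinarith
  have hNpos : (0:ℝ) < N := by linarith
  have hN1 : 1 ≤ N := by exact_mod_cast Nat.one_le_cast.mp (by linarith : (1:ℝ) ≤ N)
  have hppos : (0:ℝ) < p := by linarith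
  set c : ℝ := 23 * π^2 * p / (80 * (N:ℝ)^2) with hcdef
  have hc : 0 < c := by
    rw [hcdef]; positivity
  -- termwise bound
  have hterm : ∀ l ∈ Finset.Icc (-(N : ℤ)) ((N : ℤ) - 1),
      (2 * Real.cos ((l : ℝ) * π / (2 * N))) ^ (4 * p) *
          Real.exp (π ^ 2 * p * (l : ℝ) ^ 2 / (16 * (N : ℝ) ^ 2))
        ≤ (2:ℝ)^(4*p) * Real.exp (-c * (l:ℝ)^2) := by
    intro l hl
    rw [Finset.mem_Icc] at hl
    have hlabs : |(l:ℝ)| ≤ N := by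
      rw [abs_le]
      constructor
      · exact_mod_cast hl.1
      · have : (l:ℝ) ≤ (N:ℝ) - 1 := by exact_mod_cast hl.2
        linarith
    set x : ℝ := (l : ℝ) * π / (2 * N) with hxdef
    have hxabs : |x| ≤ π/2 := by
      rw [hxdef, abs_div, abs_mul, abs_of_pos (by linarith : (0:ℝ) < π),
        abs_of_pos (by linarith : (0:ℝ) < 2 * (N:ℝ)), div_le_iff₀ (by linarith : (0:ℝ) < 2 * (N:ℝ))]
      calc |(l:ℝ)| * π ≤ (N:ℝ) * π := by
            apply mul_le_mul_of_nonneg_right hlabs (by linarith)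
        _ = π / 2 * (2 * N) := by ring
    have hcos0 : 0 ≤ Real.cos x := by
      apply Real.cos_nonneg_of_mem_Icc
      constructor
      · linarith [abs_le.1 hxabs |>.1]
      · linarith [abs_le.1 hxabs |>.2]
    have hcb := cos_le_exp_neg hxabs
    have hpow : Real.cos x ^ (4*p) ≤ Real.exp (-(7/20) * x^2) ^ (4*p) :=
      pow_le_pow_left₀ hcos0 hcb (4*p)
    have e1 : Real.exp (-(7/20) * x^2) ^ (4*p) = Real.exp (((4*p:ℕ):ℝ) * (-(7/20) * x^2)) :=
      (Real.exp_nat_mul _ _).symm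
    have e2 : ((4*p:ℕ):ℝ) * (-(7/20) * x^2) + π ^ 2 * p * (l : ℝ) ^ 2 / (16 * (N : ℝ) ^ 2)
        = -c * (l:ℝ)^2 := by
      rw [hxdef, hcdef]
      have hNne : (N:ℝ) ≠ 0 := ne_of_gt hNpos
      push_cast
      field_simp
      ring
    calc (2 * Real.cos x) ^ (4 * p) * Real.exp (π ^ 2 * p * (l : ℝ) ^ 2 / (16 * (N : ℝ) ^ 2))
        = (2:ℝ)^(4*p) * (Real.cos x ^ (4*p) * Real.exp (π ^ 2 * p * (l : ℝ) ^ 2 / (16 * (N : ℝ) ^ 2))) := by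
          rw [mul_pow]; ring
      _ ≤ (2:ℝ)^(4*p) * (Real.exp (((4*p:ℕ):ℝ) * (-(7/20) * x^2)) * Real.exp (π ^ 2 * p * (l : ℝ) ^ 2 / (16 * (N : ℝ) ^ 2))) := by
          apply mul_le_mul_of_nonneg_left _ (by positivity)
          apply mul_le_mul_of_nonneg_right _ (Real.exp_nonneg _)
          rw [← e1]; exact hpow
      _ = (2:ℝ)^(4*p) * Real.exp (-c * (l:ℝ)^2) := by
          rw [← Real.exp_add, e2]
  have hsum1 : ∑ l ∈ Finset.Icc (-(N : ℤ)) ((N : ℤ) - 1),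
        (2 * Real.cos ((l : ℝ) * π / (2 * N))) ^ (4 * p) *
          Real.exp (π ^ 2 * p * (l : ℝ) ^ 2 / (16 * (N : ℝ) ^ 2))
      ≤ (2:ℝ)^(4*p) * (1 + Real.sqrt (π / c)) := by
    calc _ ≤ ∑ l ∈ Finset.Icc (-(N : ℤ)) ((N : ℤ) - 1), (2:ℝ)^(4*p) * Real.exp (-c * (l:ℝ)^2) :=
          Finset.sum_le_sum hterm
      _ = (2:ℝ)^(4*p) * ∑ l ∈ Finset.Icc (-(N : ℤ)) ((N : ℤ) - 1), Real.exp (-c * (l:ℝ)^2) := by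
          rw [Finset.mul_sum]
      _ ≤ (2:ℝ)^(4*p) * (1 + Real.sqrt (π / c)) := by
          apply mul_le_mul_of_nonneg_left (gauss_sum_le N hN1 hc) (by positivity)
  -- combine with binomial bound
  set C : ℝ := (Nat.choose (4*p) (2*p) : ℝ) with hCdef
  have hC0 : (0:ℝ) ≤ C := by positivity
  have hS0 : (0:ℝ) ≤ 1 + Real.sqrt (π / c) := by positivity
  have hsum2 : (2:ℝ)^(4*p) * (1 + Real.sqrt (π / c))
      ≤ 2 * Real.sqrt (2*p) * C * (1 + Real.sqrt (π / c)) :=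
    mul_le_mul_of_nonneg_right (two_pow_le_binom p (by omega)) hS0
  -- key algebraic identity
  have hkey : Real.sqrt (2*(p:ℝ)) * Real.sqrt (π / c) = N * Real.sqrt (160/(23*π)) := by
    rw [← Real.sqrt_mul (by positivity)]
    have e : 2*(p:ℝ) * (π / c) = (N:ℝ)^2 * (160/(23*π)) := by
      rw [hcdef]
      have hNne : (N:ℝ) ≠ 0 := ne_of_gt hNpos
      have hpine : π ≠ 0 := by positivity
      have hpne : (p:ℝ) ≠ 0 := ne_of_gt hppos
      field_simp
      ring
    rw [e, Real.sqrt_mul (sq_nonneg _), Real.sqrt_sq hNpos.le]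
  have hq : Real.sqrt (160/(23*π)) ≤ 1.49 := by
    rw [show (1.49:ℝ) = Real.sqrt (1.49^2) from (Real.sqrt_sq (by norm_num)).symm]
    apply Real.sqrt_le_sqrt
    rw [div_le_iff₀ (by positivity)]
    nlinarith
  have hs2 : Real.sqrt (2*(p:ℝ)) ≤ 0.46 * N := by
    rw [Real.sqrt_mul (by norm_num : (0:ℝ) ≤ 2)]
    have h2 : Real.sqrt 2 ≤ 1.415 := by
      rw [show (1.415:ℝ) = Real.sqrt (1.415^2) from (Real.sqrt_sq (by norm_num)).symm]
      apply Real.sqrt_le_sqrt; norm_num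
    have hsp' : 3.141592 * Real.sqrt p ≤ (N:ℝ) := by
      have := mul_le_mul_of_nonneg_right hpi.le (Real.sqrt_nonneg (p:ℝ))
      linarith
    have hmul2 : Real.sqrt 2 * Real.sqrt p ≤ 1.415 * Real.sqrt p :=
      mul_le_mul_of_nonneg_right h2 (Real.sqrt_nonneg _)
    linarith
  have hfinal : 2 * Real.sqrt (2*(p:ℝ)) * C * (1 + Real.sqrt (π / c)) ≤ 4 * N * C := by
    have expand : 2 * Real.sqrt (2*(p:ℝ)) * C * (1 + Real.sqrt (π / c))
        = 2 * C * (Real.sqrt (2*(p:ℝ)) + Real.sqrt (2*(p:ℝ)) * Real.sqrt (π / c)) := by ring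
    rw [expand, hkey]
    have h2 : (N:ℝ) * Real.sqrt (160/(23*π)) ≤ (N:ℝ) * 1.49 :=
      mul_le_mul_of_nonneg_left hq hNpos.le
    have hb : Real.sqrt (2*(p:ℝ)) + (N:ℝ) * Real.sqrt (160/(23*π)) ≤ 2 * N := by
      linarith
    calc 2 * C * (Real.sqrt (2*(p:ℝ)) + (N:ℝ) * Real.sqrt (160/(23*π)))
        ≤ 2 * C * (2 * N) := mul_le_mul_of_nonneg_left hb (by positivity)
      _ = 4 * N * C := by ring
  exact le_trans hsum1 (le_trans hsum2 hfinal)
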